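/- arXiv:1606.03142 — 3 statements merged into one kernel-verified Lean document; each statement's English description precedes it below -/
import Mathlib

section
/- Let g ≥ 2 and let k, l be integers with 1 ≤ k < l ≤ g. Then there do not exist a real 2g×2g matrix A satisfying AᵀJ_{2g}A = J_{2g} or AᵀJ_{2g}A = −J_{2g}, together with an integer 2×2 matrix B of determinant 1 or −1, such that P_k · A = B · P_l (where B and P_k, P_l are regarded as real matrices). -/
open Matrix

/-- `J`, the standard 2×2 symplectic block, assembled into the block-diagonal
`2g × 2g` matrix `J_{2g}` with `g` diagonal blocks equal to `J = !![0,1;-1,0]`. -/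
def Jmat (g : ℕ) : Matrix (Fin (2 * g)) (Fin (2 * g)) ℝ :=
  Matrix.of fun i j =>
    if (i : ℕ) / 2 = (j : ℕ) / 2 then
      (if (i : ℕ) % 2 = 0 ∧ (j : ℕ) % 2 = 1 then 1
       else if (i : ℕ) % 2 = 1 ∧ (j : ℕ) % 2 = 0 then -1 else 0)
    else 0

/-- `P_k`, the `2 × 2g` matrix `(I I ⋯ I 0 ⋯ 0)` consisting of `k` copies of the
`2×2` identity matrix followed by `g - k` zero `2×2` blocks. -/
def Pmat (g k : ℕ) : Matrix (Fin 2) (Fin (2 * g)) ℝ :=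
  Matrix.of fun i j => if (j : ℕ) < 2 * k ∧ (j : ℕ) % 2 = (i : ℕ) then 1 else 0

namespace NoSympAux

def J2 : Matrix (Fin 2) (Fin 2) ℝ := !![0,1;-1,0]

def idx (g : ℕ) (b : Fin g) (t : Fin 2) : Fin (2 * g) :=
  ⟨2 * b + t, by have := b.isLt; have := t.isLt; omega⟩

lemma sum_decomp {g : ℕ} (f : Fin (2 * g) → ℝ) :
    ∑ m, f m = ∑ b : Fin g, ∑ t : Fin 2, f (idx g b t) := by
  have hbij : Function.Bijective (fun p : Fin g × Fin 2 => idx g p.1 p.2) := by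
    rw [Fintype.bijective_iff_injective_and_card]
    constructor
    · rintro ⟨b, t⟩ ⟨b', t'⟩ h
      have h1 : 2 * (b : ℕ) + t = 2 * (b' : ℕ) + t' := congrArg Fin.val h
      have ht := t.isLt; have ht' := t'.isLt
      have : (b : ℕ) = b' ∧ (t : ℕ) = t' := by omega
      exact Prod.ext (Fin.ext this.1) (Fin.ext this.2)
    · simp [mul_comm]
  have h := Fintype.sum_bijective _ hbij (fun p : Fin g × Fin 2 => f (idx g p.1 p.2)) f
    (fun p => rfl)
  rw [Fintype.sum_prod_type] at h
  exact h.symm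

lemma Jmat_apply_idx_right (g : ℕ) (i : Fin (2*g)) (b : Fin g) (t : Fin 2) :
    Jmat g i (idx g b t) =
      if (i : ℕ) / 2 = (b : ℕ) then
        (if (i : ℕ) % 2 = 0 ∧ (t : ℕ) = 1 then 1
         else if (i : ℕ) % 2 = 1 ∧ (t : ℕ) = 0 then -1 else 0)
      else 0 := by
  have ht := t.isLt
  have h1 : ((idx g b t : Fin (2*g)) : ℕ) / 2 = b := by simp [idx]; omega
  have h2 : ((idx g b t : Fin (2*g)) : ℕ) % 2 = t := by simp [idx]; omega
  simp only [Jmat, of_apply, h1, h2]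

lemma Jmat_apply_idx_left (g : ℕ) (b : Fin g) (t : Fin 2) (j : Fin (2*g)) :
    Jmat g (idx g b t) j =
      if (b : ℕ) = (j : ℕ) / 2 then
        (if (t : ℕ) = 0 ∧ (j : ℕ) % 2 = 1 then 1
         else if (t : ℕ) = 1 ∧ (j : ℕ) % 2 = 0 then -1 else 0)
      else 0 := by
  have ht := t.isLt
  have h1 : ((idx g b t : Fin (2*g)) : ℕ) / 2 = b := by simp [idx]; omega
  have h2 : ((idx g b t : Fin (2*g)) : ℕ) % 2 = t := by simp [idx]; omega
  simp only [Jmat, of_apply, h1, h2]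

lemma Jmat_apply_idx_idx (g : ℕ) (b b' : Fin g) (t t' : Fin 2) :
    Jmat g (idx g b t) (idx g b' t') =
      if (b : ℕ) = (b' : ℕ) then
        (if (t : ℕ) = 0 ∧ (t' : ℕ) = 1 then 1
         else if (t : ℕ) = 1 ∧ (t' : ℕ) = 0 then -1 else 0)
      else 0 := by
  have h1 : ((idx g b' t' : Fin (2*g)) : ℕ) / 2 = b' := by
    have := t'.isLt; simp [idx]; omega
  have h2 : ((idx g b' t' : Fin (2*g)) : ℕ) % 2 = t' := by
    have := t'.isLt; simp [idx]; omega
  rw [Jmat_apply_idx_left, h1, h2]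

lemma Pmat_apply_idx (g k : ℕ) (i : Fin 2) (b : Fin g) (t : Fin 2) :
    Pmat g k i (idx g b t) = if (b : ℕ) < k ∧ (t : ℕ) = (i : ℕ) then 1 else 0 := by
  have ht := t.isLt
  have h : (((idx g b t : Fin (2*g)) : ℕ) < 2 * k ∧
      ((idx g b t : Fin (2*g)) : ℕ) % 2 = (i : ℕ)) ↔ ((b : ℕ) < k ∧ (t : ℕ) = (i : ℕ)) := by
    simp only [idx]; omega
  simp only [Pmat, of_apply]
  rw [if_congr h rfl rfl]


lemma J_mul_J (g : ℕ) : Jmat g * Jmat g = -1 := by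
  ext i j
  rw [Matrix.mul_apply, sum_decomp (fun m => Jmat g i m * Jmat g m j)]
  have hi := i.isLt
  have hb0lt : (i : ℕ) / 2 < g := by omega
  set b0 : Fin g := ⟨(i : ℕ) / 2, hb0lt⟩ with hb0
  have h0 : ∀ b ∈ Finset.univ, b ≠ b0 →
      (∑ t : Fin 2, Jmat g i (idx g b t) * Jmat g (idx g b t) j) = 0 := by
    intro b _ hb
    have hne : ¬ ((i : ℕ) / 2 = (b : ℕ)) := by
      intro h; exact hb (Fin.ext (by simp [hb0, ← h]))
    simp [Jmat_apply_idx_right, hne]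
  rw [Finset.sum_eq_single_of_mem b0 (Finset.mem_univ b0) h0, Fin.sum_univ_two]
  simp only [Jmat_apply_idx_right, Jmat_apply_idx_left, Fin.val_zero, Fin.val_one]
  have hb0v : (b0 : ℕ) = (i : ℕ) / 2 := rfl
  have hij : (i = j) ↔ ((i : ℕ) = (j : ℕ)) := Fin.ext_iff
  norm_num [Matrix.neg_apply, Matrix.one_apply, hb0v, hij]
  split_ifs <;> try omega
  all_goals norm_num

lemma sum_ite_lt (g k : ℕ) (hkg : k ≤ g) (c : ℝ) :
    (∑ b : Fin g, if (b : ℕ) < k then c else 0) = k * c := by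
  rw [Fin.sum_univ_eq_sum_range (fun b => if b < k then c else 0)]
  rw [Finset.range_eq_Ico, ← Finset.sum_Ico_consecutive _ (Nat.zero_le k) hkg]
  rw [Finset.sum_congr rfl (fun b hb => if_pos (Finset.mem_Ico.1 hb).2)]
  rw [Finset.sum_congr rfl
    (fun b hb => if_neg (by have := (Finset.mem_Ico.1 hb).1; omega))]
  simp [mul_comm]

set_option maxHeartbeats 1000000 in
lemma PJP (g k : ℕ) (hkg : k ≤ g) :
    Pmat g k * Jmat g * (Pmat g k)ᵀ = (k : ℝ) • J2 := by
  have hPJ : ∀ (i : Fin 2) (b : Fin g) (t : Fin 2),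
      (Pmat g k * Jmat g) i (idx g b t) =
      if (b : ℕ) < k then
        (if (i : ℕ) = 0 ∧ (t : ℕ) = 1 then 1
         else if (i : ℕ) = 1 ∧ (t : ℕ) = 0 then -1 else 0)
      else 0 := by
    intro i b t
    rw [Matrix.mul_apply, sum_decomp (fun n => Pmat g k i n * Jmat g n (idx g b t))]
    have h0 : ∀ b' ∈ Finset.univ, b' ≠ b →
        (∑ t' : Fin 2, Pmat g k i (idx g b' t') * Jmat g (idx g b' t') (idx g b t)) = 0 := by
      intro b' _ hb'
      have hne : ¬ ((b' : ℕ) = (b : ℕ)) := fun h => hb' (Fin.ext h)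
      simp [Jmat_apply_idx_idx, hne]
    rw [Finset.sum_eq_single_of_mem b (Finset.mem_univ b) h0, Fin.sum_univ_two]
    simp only [Pmat_apply_idx, Jmat_apply_idx_idx, Fin.val_zero, Fin.val_one]
    have hiv := i.isLt
    have htv := t.isLt
    norm_num
    split_ifs <;> try omega
    all_goals norm_num
  ext i i'
  rw [Matrix.mul_apply,
    sum_decomp (fun m => (Pmat g k * Jmat g) i m * (Pmat g k)ᵀ m i')]
  simp only [Matrix.transpose_apply, hPJ, Pmat_apply_idx]
  have hiv := i.isLt
  have hiv' := i'.isLt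
  have hinner : ∀ b : Fin g,
      (∑ t : Fin 2,
        (if (b : ℕ) < k then
          (if (i : ℕ) = 0 ∧ (t : ℕ) = 1 then 1
           else if (i : ℕ) = 1 ∧ (t : ℕ) = 0 then -1 else 0)
         else 0) * (if (b : ℕ) < k ∧ (t : ℕ) = (i' : ℕ) then 1 else 0)) =
      if (b : ℕ) < k then J2 i i' else 0 := by
    intro b
    rw [Fin.sum_univ_two]
    have hJ2 : J2 i i' = if (i : ℕ) = 0 ∧ (i' : ℕ) = 1 then 1
        else if (i : ℕ) = 1 ∧ (i' : ℕ) = 0 then -1 else 0 := by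
      fin_cases i <;> fin_cases i' <;> simp [J2]
    rw [hJ2]
    norm_num
    split_ifs <;> try omega
    all_goals norm_num
  rw [Finset.sum_congr rfl (fun b _ => hinner b), sum_ite_lt g k hkg]
  simp [Matrix.smul_apply]

lemma conj_J2 (M : Matrix (Fin 2) (Fin 2) ℝ) : M * J2 * Mᵀ = M.det • J2 := by
  ext i j
  fin_cases i <;> fin_cases j <;>
    simp [J2, Matrix.mul_apply, Fin.sum_univ_two, Matrix.det_fin_two] <;> ring

end NoSympAux

open NoSympAux

/-- Proposition 7.2: for `g ≥ 2` and `1 ≤ k < l ≤ g` there are no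
`A ∈ Sp^±(2g, ℝ)` and `B ∈ GL(2, ℤ)` with `P_k · A = B · P_l`. -/
theorem no_generalized_symplectic_intertwiner
    (g k l : ℕ) (hg : 2 ≤ g) (hk : 1 ≤ k) (hkl : k < l) (hlg : l ≤ g) :
    ¬ ∃ (A : Matrix (Fin (2 * g)) (Fin (2 * g)) ℝ)
        (B : Matrix (Fin 2) (Fin 2) ℤ),
        (Aᵀ * Jmat g * A = Jmat g ∨ Aᵀ * Jmat g * A = -(Jmat g)) ∧
        (B.det = 1 ∨ B.det = -1) ∧
        Pmat g k * A = B.map (Int.cast : ℤ → ℝ) * Pmat g l := by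
  rintro ⟨A, B, hA, hB, hPA⟩
  obtain ⟨ε, hε, hA'⟩ : ∃ ε : ℝ, (ε = 1 ∨ ε = -1) ∧ Aᵀ * Jmat g * A = ε • Jmat g := by
    rcases hA with h | h
    · exact ⟨1, Or.inl rfl, by simpa using h⟩
    · exact ⟨-1, Or.inr rfl, by simpa using h⟩
  have hεε : ε * ε = 1 := by rcases hε with rfl | rfl <;> norm_num
  have hJJ := J_mul_J g
  have hJnegJ : Jmat g * (-(Jmat g)) = 1 := by rw [mul_neg, hJJ]; simp
  have hnegJJ : (-(Jmat g)) * Jmat g = 1 := by rw [neg_mul, hJJ]; simp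
  have hA'' : Aᵀ * (Jmat g * A) = ε • Jmat g := by rw [← Matrix.mul_assoc]; exact hA'
  have hCA : (ε • ((-(Jmat g)) * Aᵀ * Jmat g)) * A = 1 := by
    rw [smul_mul_assoc]
    simp only [Matrix.mul_assoc]
    rw [show Aᵀ * (Jmat g * A) = ε • Jmat g from hA'']
    rw [Matrix.mul_smul, smul_smul, hεε, one_smul]
    exact hnegJJ
  have hAC : A * (ε • ((-(Jmat g)) * Aᵀ * Jmat g)) = 1 := mul_eq_one_comm.mp hCA
  have hAJA : A * Jmat g * Aᵀ = ε • Jmat g := by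
    have h1 : (A * (ε • ((-(Jmat g)) * Aᵀ * Jmat g))) * (-(Jmat g)) = 1 * (-(Jmat g)) := by
      rw [hAC]
    rw [one_mul, Matrix.mul_smul, smul_mul_assoc] at h1
    simp only [Matrix.mul_assoc] at h1
    rw [hJnegJ, mul_one] at h1
    -- h1 : ε • (A * (-Jmat g * Aᵀ)) = -Jmat g
    have h2 := congrArg (fun M => ε • M) h1
    rw [smul_smul, hεε, one_smul] at h2
    -- h2 : A * (-Jmat g * Aᵀ) = ε • -Jmat g
    rw [neg_mul, mul_neg, smul_neg, neg_inj] at h2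
    rw [Matrix.mul_assoc]
    exact h2
  set B' : Matrix (Fin 2) (Fin 2) ℝ := B.map (Int.cast : ℤ → ℝ) with hB'
  have hdet : B'.det = ((B.det : ℤ) : ℝ) := (RingHom.map_det (Int.castRingHom ℝ) B).symm
  have hkg : k ≤ g := le_of_lt (lt_of_lt_of_le hkl hlg)
  have e1 : Pmat g k * (A * Jmat g * Aᵀ) * (Pmat g k)ᵀ = (ε * (k : ℝ)) • J2 := by
    rw [hAJA, Matrix.mul_smul, Matrix.smul_mul, PJP g k hkg, smul_smul]
  have e2 : Pmat g k * (A * Jmat g * Aᵀ) * (Pmat g k)ᵀ = ((l : ℝ) * B'.det) • J2 := by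
    have h3 : Pmat g k * (A * Jmat g * Aᵀ) * (Pmat g k)ᵀ
        = (Pmat g k * A) * Jmat g * (Pmat g k * A)ᵀ := by
      rw [Matrix.transpose_mul]; simp only [Matrix.mul_assoc]
    rw [h3, hPA, Matrix.transpose_mul]
    have h4 : (B' * Pmat g l) * Jmat g * ((Pmat g l)ᵀ * B'ᵀ)
        = B' * ((Pmat g l * Jmat g * (Pmat g l)ᵀ) * B'ᵀ) := by
      simp only [Matrix.mul_assoc]
    rw [h4, PJP g l hlg, Matrix.smul_mul, Matrix.mul_smul, ← Matrix.mul_assoc,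
      conj_J2, smul_smul]
  have hkey : ε * (k : ℝ) = (l : ℝ) * B'.det := by
    have h5 := e1.symm.trans e2
    have h6 := congrFun (congrFun h5 0) 1
    simpa [J2, Matrix.smul_apply] using h6
  rw [hdet] at hkey
  have hk' : (1 : ℝ) ≤ (k : ℝ) := by exact_mod_cast hk
  have hkl' : (k : ℝ) < (l : ℝ) := by exact_mod_cast hkl
  rcases hB with h | h <;> rw [h] at hkey <;> push_cast at hkey <;>
    rcases hε with rfl | rfl <;> linarith
end

section
/- Let g ≥ 1 and let k, l be integers with 1 ≤ k ≤ g and 1 ≤ l ≤ g. Then there exist a real 2g×2g matrix A satisfying AᵀJ_{2g}A = J_{2g} or AᵀJ_{2g}A = −J_{2g}, and an integer 2×2 matrix B of determinant 1 or −1, such that P_k · A = B · P_l (with B, P_k, P_l regarded as real matrices), if and only if k = l. -/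
open Matrix

section aux

lemma Jmul (g : ℕ) : Jmat g * Jmat g = -1 := by
  ext i j
  rw [Matrix.mul_apply]
  have hi : (i : ℕ) < 2 * g := i.isLt
  have hj : (j : ℕ) < 2 * g := j.isLt
  have ha : 2 * ((i : ℕ) / 2) + (1 - (i : ℕ) % 2) < 2 * g := by omega
  rw [Finset.sum_eq_single (⟨2 * ((i : ℕ) / 2) + (1 - (i : ℕ) % 2), ha⟩ : Fin (2 * g))]
  · simp only [Jmat, of_apply, Matrix.neg_apply, one_apply]
    rcases eq_or_ne i j with rfl | hne
    · simp only [if_pos rfl]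
      split_ifs <;> (try norm_num) <;> first | exact ‹False› | omega
    · have : (i : ℕ) ≠ (j : ℕ) := fun h => hne (Fin.ext h)
      split_ifs <;> (try norm_num) <;> first | exact ‹False› | omega
  · intro b _ hb
    have hb' : (b : ℕ) ≠ 2 * ((i : ℕ) / 2) + (1 - (i : ℕ) % 2) := by
      intro h; exact hb (Fin.ext h)
    simp only [Jmat, of_apply]
    split_ifs <;> (try norm_num) <;> first | exact ‹False› | omega
  · intro h; exact absurd (Finset.mem_univ _) h

lemma PJ (g k : ℕ) (hk : k ≤ g) :
    Pmat g k * Jmat g = Matrix.of fun (i : Fin 2) (b : Fin (2 * g)) =>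
      if (b : ℕ) < 2 * k ∧ (b : ℕ) % 2 ≠ (i : ℕ) then (if (i : ℕ) = 0 then 1 else -1)
      else 0 := by
  ext i b
  rw [Matrix.mul_apply]
  have hb : (b : ℕ) < 2 * g := b.isLt
  have hi : (i : ℕ) < 2 := i.isLt
  have ha : 2 * ((b : ℕ) / 2) + (i : ℕ) < 2 * g := by omega
  rw [Finset.sum_eq_single (⟨2 * ((b : ℕ) / 2) + (i : ℕ), ha⟩ : Fin (2 * g))]
  · simp only [Pmat, Jmat, Matrix.of_apply]
    split_ifs <;> (try norm_num) <;> first | exact ‹False› | omega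
  · intro a _ hne
    have hne' : (a : ℕ) ≠ 2 * ((b : ℕ) / 2) + (i : ℕ) := fun h => hne (Fin.ext h)
    simp only [Pmat, Jmat, Matrix.of_apply]
    split_ifs <;> (try norm_num) <;> first | exact ‹False› | omega
  · intro h; exact absurd (Finset.mem_univ _) h

lemma count_aux (c r : ℕ) (hr : r < 2) :
    ∑ n ∈ Finset.range (2 * c), (if n % 2 = r then (1 : ℝ) else 0) = c := by
  induction c with
  | zero => simp
  | succ c ih =>
      have : 2 * (c + 1) = (2 * c + 1) + 1 := by ring
      rw [this, Finset.sum_range_succ, Finset.sum_range_succ, ih]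
      have h0 : (2 * c) % 2 = 0 := by omega
      have h1 : (2 * c + 1) % 2 = 1 := by omega
      interval_cases r <;> simp [h0, h1]

lemma count_sum (N c r : ℕ) (h : 2 * c ≤ N) (hr : r < 2) :
    ∑ n ∈ Finset.range N, (if n < 2 * c ∧ n % 2 = r then (1 : ℝ) else 0) = c := by
  rw [← Finset.sum_subset (Finset.range_subset_range.mpr h)
      (by intro x hx hx'; simp only [Finset.mem_range] at hx hx'; rw [if_neg]; omega)]
  rw [← count_aux c r hr]
  apply Finset.sum_congr rfl
  intro x hx
  simp only [Finset.mem_range] at hx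
  simp [hx]

lemma PJPt (g k : ℕ) (hk : k ≤ g) :
    Pmat g k * Jmat g * (Pmat g k)ᵀ = (k : ℝ) • !![0, 1; -1, 0] := by
  rw [PJ g k hk]
  ext i j
  rw [Matrix.mul_apply]
  simp only [Matrix.of_apply, Pmat, transpose_apply]
  fin_cases i <;> fin_cases j <;>
    simp only [Fin.isValue, Fin.val_zero, Fin.val_one, Matrix.smul_apply, smul_eq_mul, reduceIte, if_true]
  · rw [Finset.sum_eq_zero]
    · simp
    intro b _; split_ifs <;> (try norm_num) <;> first | exact ‹False› | omega
  · have h1 : ∑ b : Fin (2 * g),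
        ((if (b : ℕ) < 2 * k ∧ ¬(b : ℕ) % 2 = 0 then (1:ℝ) else 0) *
         (if (b : ℕ) < 2 * k ∧ (b : ℕ) % 2 = 1 then 1 else 0)) =
        ∑ n ∈ Finset.range (2 * g), (if n < 2 * k ∧ n % 2 = 1 then (1:ℝ) else 0) := by
      rw [← Fin.sum_univ_eq_sum_range (fun n => if n < 2 * k ∧ n % 2 = 1 then (1:ℝ) else 0) (2 * g)]
      apply Finset.sum_congr rfl; intro b _
      split_ifs <;> (try norm_num) <;> first | exact ‹False› | omega
    simp only [ne_eq] at *
    rw [h1, count_sum (2 * g) k 1 (by omega) (by omega)]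
    simp
  · have h1 : ∑ b : Fin (2 * g),
        ((if (b : ℕ) < 2 * k ∧ ¬(b : ℕ) % 2 = 1 then (if (1:ℕ) = 0 then (1:ℝ) else -1) else 0) *
         (if (b : ℕ) < 2 * k ∧ (b : ℕ) % 2 = 0 then 1 else 0)) =
        ∑ n ∈ Finset.range (2 * g), (-1 : ℝ) * (if n < 2 * k ∧ n % 2 = 0 then (1:ℝ) else 0) := by
      rw [← Fin.sum_univ_eq_sum_range
        (fun n => (-1 : ℝ) * (if n < 2 * k ∧ n % 2 = 0 then (1:ℝ) else 0)) (2 * g)]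
      apply Finset.sum_congr rfl; intro b _
      split_ifs <;> (try norm_num) <;> first | exact ‹False› | omega
    simp only [ne_eq] at *
    rw [h1, ← Finset.mul_sum, count_sum (2 * g) k 0 (by omega) (by omega)]
    simp
  · rw [Finset.sum_eq_zero]
    · simp
    intro b _; split_ifs <;> (try norm_num) <;> first | exact ‹False› | omega

lemma BJB (B : Matrix (Fin 2) (Fin 2) ℝ) :
    B * !![0, 1; -1, 0] * Bᵀ = B.det • !![0, 1; -1, 0] := by
  ext i j
  fin_cases i <;> fin_cases j <;>
    simp [Matrix.mul_apply, Fin.sum_univ_two, Matrix.det_fin_two] <;> ring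

lemma detmap (B : Matrix (Fin 2) (Fin 2) ℤ) :
    (B.map (Int.cast : ℤ → ℝ)).det = ((B.det : ℤ) : ℝ) := by
  rw [Matrix.det_fin_two, Matrix.det_fin_two]
  simp [Matrix.map_apply]

end aux

/-- For `g ≥ 1` and `1 ≤ k, l ≤ g`, there exist `A ∈ Sp^±(2g, ℝ)` and
`B ∈ GL(2, ℤ)` with `P_k · A = B · P_l` if and only if `k = l`. -/
theorem exists_generalized_symplectic_intertwiner_iff
    (g k l : ℕ) (hg : 1 ≤ g) (hk1 : 1 ≤ k) (hkg : k ≤ g) (hl1 : 1 ≤ l) (hlg : l ≤ g) :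
    (∃ (A : Matrix (Fin (2 * g)) (Fin (2 * g)) ℝ)
       (B : Matrix (Fin 2) (Fin 2) ℤ),
       (Aᵀ * Jmat g * A = Jmat g ∨ Aᵀ * Jmat g * A = -(Jmat g)) ∧
       (B.det = 1 ∨ B.det = -1) ∧
       Pmat g k * A = B.map (Int.cast : ℤ → ℝ) * Pmat g l) ↔ k = l := by
  constructor
  · rintro ⟨A, B, hA, hB, hPA⟩
    obtain ⟨ε, hε1, hε⟩ : ∃ ε : ℝ, (ε = 1 ∨ ε = -1) ∧ Aᵀ * Jmat g * A = ε • Jmat g := by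
      rcases hA with h | h
      · exact ⟨1, Or.inl rfl, by simpa using h⟩
      · exact ⟨-1, Or.inr rfl, by simpa using h⟩
    have hJJ : Jmat g * Jmat g = -1 := Jmul g
    have hε2 : ε ^ 2 = 1 := by rcases hε1 with rfl | rfl <;> norm_num
    -- det J ≠ 0
    have hJd : (Jmat g).det ≠ 0 := by
      intro h0
      have := congrArg Matrix.det hJJ
      rw [Matrix.det_mul, h0, mul_zero] at this
      have h1 : (-1 : Matrix (Fin (2 * g)) (Fin (2 * g)) ℝ).det = (-1 : ℝ) ^ (2 * g) := by
        rw [show (-1 : Matrix (Fin (2 * g)) (Fin (2 * g)) ℝ) = -(1 : Matrix _ _ ℝ) from rfl,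
          Matrix.det_neg, Matrix.det_one, mul_one, Fintype.card_fin]
      rw [h1] at this
      have : ((-1 : ℝ) ^ (2 * g)) = 1 := by
        rw [pow_mul]; norm_num
      simp_all
    have hAd : IsUnit A.det := by
      have hd := congrArg Matrix.det hε
      rw [Matrix.det_mul, Matrix.det_mul, Matrix.det_transpose, Matrix.det_smul,
        Fintype.card_fin] at hd
      have hεg : ε ^ (2 * g) = 1 := by
        rw [pow_mul, hε2, one_pow]
      rw [hεg, one_mul] at hd
      have : A.det * A.det = 1 := by
        apply mul_right_cancel₀ hJd
        rw [one_mul]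
        linear_combination hd
      exact IsUnit.of_mul_eq_one _ this
    have hAinv : A * A⁻¹ = 1 := Matrix.mul_nonsing_inv A hAd
    -- A J Aᵀ = ε J
    have e1 : Aᵀ * Jmat g = ε • (Jmat g * A⁻¹) := by
      have h' : Aᵀ * Jmat g * A * A⁻¹ = (ε • Jmat g) * A⁻¹ := by rw [hε]
      rw [Matrix.mul_assoc (Aᵀ * Jmat g) A A⁻¹, hAinv, Matrix.mul_one] at h'
      rw [h', Matrix.smul_mul]
    have e2 : Aᵀ = ε • (Jmat g * (A⁻¹ * -(Jmat g))) := by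
      have h' : Aᵀ * Jmat g * -(Jmat g) = (ε • (Jmat g * A⁻¹)) * -(Jmat g) := by rw [e1]
      rw [Matrix.mul_assoc Aᵀ, Matrix.mul_neg, hJJ, neg_neg, Matrix.mul_one] at h'
      rw [h', Matrix.smul_mul, Matrix.mul_assoc]
    have hAJAt : A * Jmat g * Aᵀ = ε • Jmat g := by
      rw [e2, Matrix.mul_smul]
      congr 1
      calc A * Jmat g * (Jmat g * (A⁻¹ * -(Jmat g)))
          = A * (Jmat g * Jmat g) * (A⁻¹ * -(Jmat g)) := by
            simp only [Matrix.mul_assoc]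
        _ = A * (-1) * (A⁻¹ * -(Jmat g)) := by rw [hJJ]
        _ = Jmat g := by
            simp only [mul_neg, neg_mul, neg_neg, mul_one]
            rw [← Matrix.mul_assoc, hAinv, Matrix.one_mul]
    set B' : Matrix (Fin 2) (Fin 2) ℝ := B.map (Int.cast : ℤ → ℝ) with hB'
    have main : ((ε * k : ℝ)) • (!![0,1;-1,0] : Matrix (Fin 2) (Fin 2) ℝ)
        = ((((B.det : ℤ) : ℝ)) * l) • !![0,1;-1,0] := by
      calc ((ε * k : ℝ)) • (!![0,1;-1,0] : Matrix (Fin 2) (Fin 2) ℝ)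
          = ε • ((k : ℝ) • !![0,1;-1,0]) := by rw [smul_smul]
        _ = ε • (Pmat g k * Jmat g * (Pmat g k)ᵀ) := by rw [PJPt g k hkg]
        _ = Pmat g k * (ε • Jmat g) * (Pmat g k)ᵀ := by
            rw [Matrix.mul_smul, Matrix.smul_mul]
        _ = Pmat g k * (A * Jmat g * Aᵀ) * (Pmat g k)ᵀ := by rw [hAJAt]
        _ = (Pmat g k * A) * Jmat g * (Pmat g k * A)ᵀ := by
            rw [Matrix.transpose_mul]; simp only [Matrix.mul_assoc]
        _ = (B' * Pmat g l) * Jmat g * (B' * Pmat g l)ᵀ := by rw [hPA]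
        _ = B' * (Pmat g l * Jmat g * (Pmat g l)ᵀ) * B'ᵀ := by
            rw [Matrix.transpose_mul]; simp only [Matrix.mul_assoc]
        _ = B' * ((l : ℝ) • !![0,1;-1,0]) * B'ᵀ := by rw [PJPt g l hlg]
        _ = (l : ℝ) • (B' * !![0,1;-1,0] * B'ᵀ) := by
            rw [Matrix.mul_smul, Matrix.smul_mul]
        _ = (l : ℝ) • (B'.det • !![0,1;-1,0]) := by rw [BJB]
        _ = ((((B.det : ℤ) : ℝ)) * l) • !![0,1;-1,0] := by
            rw [hB', detmap, smul_smul, mul_comm]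
    have e01 := congrArg (fun M : Matrix (Fin 2) (Fin 2) ℝ => M 0 1) main
    simp only [Matrix.smul_apply, smul_eq_mul] at e01
    have hM01 : (!![0,1;-1,0] : Matrix (Fin 2) (Fin 2) ℝ) 0 1 = 1 := by simp
    rw [hM01, mul_one, mul_one] at e01
    have hk' : (1 : ℝ) ≤ (k : ℝ) := by exact_mod_cast hk1
    have hl' : (1 : ℝ) ≤ (l : ℝ) := by exact_mod_cast hl1
    have : (k : ℝ) = (l : ℝ) := by
      rcases hε1 with rfl | rfl <;> rcases hB with hd | hd <;> rw [hd] at e01 <;>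
        push_cast at e01 <;> linarith
    exact_mod_cast this
  · rintro rfl
    refine ⟨1, 1, Or.inl (by simp), Or.inl (by simp), ?_⟩
    rw [Matrix.mul_one, Matrix.map_one _ Int.cast_zero Int.cast_one, Matrix.one_mul]
end

section
/- Let g ≥ 1, let k, l be integers with 1 ≤ k ≤ g and 1 ≤ l ≤ g, let A be a real 2g×2g matrix with AᵀJ_{2g}A = J_{2g} or AᵀJ_{2g}A = −J_{2g}, and let B be an integer 2×2 matrix of determinant 1 or −1 such that P_k · A = B · P_l. Let Γ be the 2k×2g matrix consisting of the first 2k rows of A, and let K be the 2g×2g matrix, viewed as a g×g array of 2×2 blocks, whose (i,j) block equals J for 1 ≤ i, j ≤ l and is zero otherwise. Then the real 2g×2g matrix ΓᵀJ_{2k}Γ − (det(B)/k)·K has rank at most 2k − 2. -/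
open Matrix

/-- The `2g × 2g` matrix `K`, viewed as a `g × g` array of `2×2` blocks, whose
`(i,j)` block equals `J = !![0,1;-1,0]` for `1 ≤ i, j ≤ l` and vanishes
otherwise. -/
def Kmat (g l : ℕ) : Matrix (Fin (2 * g)) (Fin (2 * g)) ℝ :=
  Matrix.of fun i j =>
    if (i : ℕ) < 2 * l ∧ (j : ℕ) < 2 * l then
      (if (i : ℕ) % 2 = 0 ∧ (j : ℕ) % 2 = 1 then 1
       else if (i : ℕ) % 2 = 1 ∧ (j : ℕ) % 2 = 0 then -1 else 0)
    else 0

/-! ### Auxiliary material -/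

/-- The standard `2×2` symplectic form. -/
def J2aux : Matrix (Fin 2) (Fin 2) ℝ := !![0,1;-1,0]

lemma Kmat_eq_aux (g l : ℕ) : Kmat g l = (Pmat g l)ᵀ * J2aux * Pmat g l := by
  ext i j
  simp only [Kmat, Pmat, J2aux, Matrix.mul_apply, Fin.sum_univ_two, Matrix.transpose_apply,
    Matrix.of_apply, Matrix.cons_val', Matrix.cons_val_zero, Matrix.cons_val_one,
    Matrix.head_cons, Matrix.head_fin_const, Matrix.empty_val', Matrix.cons_val_fin_one,
    Fin.val_zero, Fin.val_one]
  split_ifs <;> first | ring1 | (exfalso; omega)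

lemma detJ2_aux (B : Matrix (Fin 2) (Fin 2) ℝ) : Bᵀ * J2aux * B = B.det • J2aux := by
  ext i j
  fin_cases i <;> fin_cases j <;>
    simp [Matrix.mul_apply, Fin.sum_univ_two, J2aux, Matrix.det_fin_two] <;> ring

lemma Pmul_aux (g k : ℕ) (hkg : k ≤ g) (A : Matrix (Fin (2*g)) (Fin (2*g)) ℝ) :
    Pmat g k * A = Pmat k k * A.submatrix (Fin.castLE (by omega : 2 * k ≤ 2 * g)) id := by
  have hle : 2 * k ≤ 2 * g := by omega
  ext i j
  rw [Matrix.mul_apply, Matrix.mul_apply]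
  rw [show (∑ m : Fin (2*k), Pmat k k i m * A.submatrix (Fin.castLE hle) id m j)
      = ∑ m ∈ (Finset.univ : Finset (Fin (2*k))).map (Fin.castLEEmb hle),
          Pmat g k i m * A m j from ?_]
  · symm
    apply Finset.sum_subset (Finset.subset_univ _)
    intro m _ hm
    have : ¬ ((m : ℕ) < 2 * k) := by
      intro hlt
      exact hm (Finset.mem_map.2 ⟨⟨(m:ℕ), hlt⟩, Finset.mem_univ _, by
        simp [Fin.castLEEmb, Fin.ext_iff]⟩)
    simp [Pmat, this]
  · rw [Finset.sum_map]
    apply Finset.sum_congr rfl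
    intro m _
    simp [Pmat, Fin.castLEEmb, Matrix.submatrix_apply, m.is_lt]

lemma count_parity_aux (k : ℕ) (r : ℕ) :
    ∑ n ∈ Finset.range (2*k), (if n % 2 = r then (1:ℝ) else 0) = if r < 2 then k else 0 := by
  induction k with
  | zero => simp
  | succ k ih =>
      have h : 2*(k+1) = (2*k+1)+1 := by ring
      rw [h, Finset.sum_range_succ, Finset.sum_range_succ, ih]
      have h1 : (2*k) % 2 = 0 := by omega
      have h2 : (2*k+1) % 2 = 1 := by omega
      rw [h1, h2]
      by_cases hr : r < 2
      · interval_cases r <;> simp <;> push_cast <;> ring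
      · have hr0 : ¬ (0 = r) := by omega
        have hr1 : ¬ (1 = r) := by omega
        simp [hr, hr0, hr1]

lemma count_parity_fin_aux (k : ℕ) (r : ℕ) (hr : r < 2) :
    ∑ j : Fin (2*k), (if (j:ℕ) % 2 = r then (1:ℝ) else 0) = k := by
  rw [Fin.sum_univ_eq_sum_range (fun n => if n % 2 = r then (1:ℝ) else 0) (2*k)]
  rw [count_parity_aux k r, if_pos hr]

/-- The parity indicator vectors, which lie in the kernel of
`Jmat k - k⁻¹ • Kmat k k`. -/
def vpar (k r : ℕ) : Fin (2*k) → ℝ := fun j => if (j:ℕ) % 2 = r then 1 else 0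

lemma sumJ_aux (k : ℕ) (i : Fin (2*k)) (r : ℕ) (hr : r < 2) :
    ∑ j : Fin (2*k), Jmat k i j * vpar k r j
      = if (i:ℕ) % 2 = 1 - r then (if r = 0 then -1 else 1) else 0 := by
  by_cases hi : (i:ℕ) % 2 = 1 - r
  · have hpart : (i:ℕ)/2 * 2 + r < 2*k := by have := i.is_lt; omega
    set j0 : Fin (2*k) := ⟨(i:ℕ)/2 * 2 + r, hpart⟩ with hj0
    rw [Finset.sum_eq_single j0]
    · simp only [Jmat, vpar, Matrix.of_apply, hi, hj0]
      split_ifs <;> first | ring1 | (exfalso; omega)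
    · intro j _ hj
      have hjne : (j:ℕ) ≠ (i:ℕ)/2 * 2 + r := fun h => hj (Fin.ext h)
      simp only [Jmat, vpar, Matrix.of_apply]
      split_ifs <;> first | ring1 | (exfalso; omega)
    · intro h; exact absurd (Finset.mem_univ _) h
  · rw [if_neg hi]
    apply Finset.sum_eq_zero
    intro j _
    simp only [Jmat, vpar, Matrix.of_apply]
    split_ifs <;> first | ring1 | (exfalso; omega)

lemma sumK_aux (k : ℕ) (i : Fin (2*k)) (r : ℕ) (hr : r < 2) :
    ∑ j : Fin (2*k), Kmat k k i j * vpar k r j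
      = if (i:ℕ) % 2 = 1 - r then (if r = 0 then -(k:ℝ) else k) else 0 := by
  have hterm : ∀ j : Fin (2*k), Kmat k k i j * vpar k r j
      = (if (i:ℕ) % 2 = 1 - r then (if r = 0 then (-1:ℝ) else 1) else 0)
          * (if (j:ℕ) % 2 = r then 1 else 0) := by
    intro j
    simp only [Kmat, vpar, Matrix.of_apply, i.is_lt, j.is_lt, and_self, if_true]
    split_ifs <;> first | ring1 | (exfalso; omega)
  calc ∑ j : Fin (2*k), Kmat k k i j * vpar k r j
      = ∑ j : Fin (2*k), (if (i:ℕ) % 2 = 1 - r then (if r = 0 then (-1:ℝ) else 1) else 0)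
          * (if (j:ℕ) % 2 = r then 1 else 0) := Finset.sum_congr rfl fun j _ => hterm j
    _ = (if (i:ℕ) % 2 = 1 - r then (if r = 0 then (-1:ℝ) else 1) else 0) * k := by
          rw [← Finset.mul_sum, count_parity_fin_aux k r hr]
    _ = _ := by split_ifs <;> ring

lemma vpar_in_ker_aux (k : ℕ) (hk : 1 ≤ k) (r : ℕ) (hr : r < 2) :
    (Jmat k - (k:ℝ)⁻¹ • Kmat k k).mulVec (vpar k r) = 0 := by
  funext i
  have hk0 : (k:ℝ) ≠ 0 := by positivity
  simp only [Matrix.mulVec, dotProduct, Matrix.sub_apply, Matrix.smul_apply,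
    Pi.zero_apply, smul_eq_mul, sub_mul, Finset.sum_sub_distrib]
  have h2 : ∑ j : Fin (2*k), (k:ℝ)⁻¹ * Kmat k k i j * vpar k r j
      = (k:ℝ)⁻¹ * ∑ j : Fin (2*k), Kmat k k i j * vpar k r j := by
    rw [Finset.mul_sum]; exact Finset.sum_congr rfl fun j _ => by ring
  rw [h2, sumJ_aux k i r hr, sumK_aux k i r hr]
  split_ifs <;> field_simp <;> ring

lemma rankN_aux (k : ℕ) (hk : 1 ≤ k) :
    (Jmat k - (k:ℝ)⁻¹ • Kmat k k).rank ≤ 2*k - 2 := by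
  set N := Jmat k - (k:ℝ)⁻¹ • Kmat k k with hN
  have hrn := LinearMap.finrank_range_add_finrank_ker N.mulVecLin
  rw [Module.finrank_fin_fun] at hrn
  have hker : 2 ≤ Module.finrank ℝ (LinearMap.ker N.mulVecLin) := by
    have h0 : vpar k 0 ∈ LinearMap.ker N.mulVecLin := by
      rw [LinearMap.mem_ker, Matrix.mulVecLin_apply]; exact vpar_in_ker_aux k hk 0 (by omega)
    have h1 : vpar k 1 ∈ LinearMap.ker N.mulVecLin := by
      rw [LinearMap.mem_ker, Matrix.mulVecLin_apply]; exact vpar_in_ker_aux k hk 1 (by omega)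
    have hli : LinearIndependent ℝ ![vpar k 0, vpar k 1] := by
      rw [LinearIndependent.pair_iff]
      intro s t hst
      have e0 := congr_fun hst ⟨0, by omega⟩
      have e1 := congr_fun hst ⟨1, by omega⟩
      simp [vpar] at e0 e1
      exact ⟨e0, e1⟩
    have hspan : Submodule.span ℝ (Set.range ![vpar k 0, vpar k 1])
        ≤ LinearMap.ker N.mulVecLin := by
      rw [Submodule.span_le]
      rintro x ⟨i, rfl⟩
      fin_cases i <;> simpa using ‹_›
    calc (2:ℕ) = Module.finrank ℝ (Submodule.span ℝ (Set.range ![vpar k 0, vpar k 1])) := by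
            rw [finrank_span_eq_card hli]; simp
      _ ≤ _ := Submodule.finrank_mono hspan
  have : N.rank = Module.finrank ℝ (LinearMap.range N.mulVecLin) := rfl
  omega

/-- The key rank estimate in the proof of Proposition 7.2: if `A ∈ Sp^±(2g, ℝ)`
and `B ∈ GL(2, ℤ)` satisfy `P_k · A = B · P_l`, and `Γ` denotes the matrix of
the first `2k` rows of `A`, then `Γᵀ J_{2k} Γ − (det B / k)·K` has rank at most
`2k − 2`. -/
theorem rank_gamma_form_le
    (g k l : ℕ) (hg : 1 ≤ g) (hk1 : 1 ≤ k) (hkg : k ≤ g) (hl1 : 1 ≤ l) (hlg : l ≤ g)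
    (A : Matrix (Fin (2 * g)) (Fin (2 * g)) ℝ)
    (hA : Aᵀ * Jmat g * A = Jmat g ∨ Aᵀ * Jmat g * A = -(Jmat g))
    (B : Matrix (Fin 2) (Fin 2) ℤ) (hB : B.det = 1 ∨ B.det = -1)
    (hPA : Pmat g k * A = B.map (Int.cast : ℤ → ℝ) * Pmat g l)
    (Γ : Matrix (Fin (2 * k)) (Fin (2 * g)) ℝ)
    (hΓ : Γ = A.submatrix (Fin.castLE (by omega : 2 * k ≤ 2 * g)) id) :
    (Γᵀ * Jmat k * Γ - ((B.det : ℝ) / (k : ℝ)) • Kmat g l).rank ≤ 2 * k - 2 := by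
  set B' := B.map (Int.cast : ℤ → ℝ) with hB'
  -- Pmat k k * Γ = B' * Pmat g l
  have hQΓ : Pmat k k * Γ = B' * Pmat g l := by
    rw [hΓ, ← Pmul_aux g k hkg A, hPA]
  -- determinant of the cast matrix
  have hdet : B'.det = (B.det : ℝ) := by
    rw [hB']
    exact (RingHom.map_det (Int.castRingHom ℝ) B).symm
  -- the key identity Γᵀ (Kmat k k) Γ = det B • Kmat g l
  have key : Γᵀ * Kmat k k * Γ = (B.det : ℝ) • Kmat g l := by
    calc Γᵀ * Kmat k k * Γ
        = (Pmat k k * Γ)ᵀ * J2aux * (Pmat k k * Γ) := by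
          rw [Kmat_eq_aux k k, Matrix.transpose_mul]
          simp only [Matrix.mul_assoc]
      _ = (Pmat g l)ᵀ * (B'ᵀ * J2aux * B') * Pmat g l := by
          rw [hQΓ, Matrix.transpose_mul]
          simp only [Matrix.mul_assoc]
      _ = (Pmat g l)ᵀ * (B'.det • J2aux) * Pmat g l := by rw [detJ2_aux B']
      _ = B'.det • ((Pmat g l)ᵀ * J2aux * Pmat g l) := by
          rw [Matrix.mul_smul, Matrix.smul_mul]
      _ = (B.det : ℝ) • Kmat g l := by rw [hdet, ← Kmat_eq_aux g l]
  -- rewrite the matrix as Γᵀ N Γ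
  have hrw : Γᵀ * Jmat k * Γ - ((B.det : ℝ) / (k : ℝ)) • Kmat g l
      = Γᵀ * (Jmat k - (k:ℝ)⁻¹ • Kmat k k) * Γ := by
    rw [Matrix.mul_sub, Matrix.sub_mul]
    congr 1
    rw [Matrix.mul_smul, Matrix.smul_mul, key, smul_smul]
    congr 1
    ring
  rw [hrw, Matrix.mul_assoc]
  calc (Γᵀ * ((Jmat k - (k:ℝ)⁻¹ • Kmat k k) * Γ)).rank
      ≤ ((Jmat k - (k:ℝ)⁻¹ • Kmat k k) * Γ).rank := Matrix.rank_mul_le_right _ _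
    _ ≤ (Jmat k - (k:ℝ)⁻¹ • Kmat k k).rank := Matrix.rank_mul_le_left _ _
    _ ≤ 2 * k - 2 := rankN_aux k hk1
end
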